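/- A finite graph G satisfies ψ(G) ≤ r attained by a proper coloring using at most m colors if and only if there exists a graph homomorphism from G to U(m,r). -/

import Mathlib

/-- Vertices of the universal graph U(m,r): pairs (i,A) with |A| = r-1 and i ∉ A. -/
def UVert (m r : ℕ) : Type :=
  {p : Fin m × Finset (Fin m) // p.2.card = r - 1 ∧ p.1 ∉ p.2}

instance (m r : ℕ) : Fintype (UVert m r) := Subtype.fintype _
instance (m r : ℕ) : DecidableEq (UVert m r) := Subtype.instDecidableEq

/-- The universal graph U(m,r): (i,A) ~ (j,B) iff i ∈ B and j ∈ A. -/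
def Ugraph (m r : ℕ) : SimpleGraph (UVert m r) where
  Adj x y := x.val.1 ∈ y.val.2 ∧ y.val.1 ∈ x.val.2
  symm := ⟨fun x y h => ⟨h.2, h.1⟩⟩
  loopless := ⟨fun x h => x.property.2 h.1⟩

instance (m r : ℕ) : DecidableRel (Ugraph m r).Adj :=
  fun _ _ => inferInstanceAs (Decidable (_ ∧ _))

/-- a finite graph G satisfies ψ(G) ≤ r attained by a proper coloring
using at most m colors iff there is a graph homomorphism G → U(m,r). -/
theorem stmt5 {V : Type} [Fintype V] [DecidableEq V] (G : SimpleGraph V)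
    [DecidableRel G.Adj] (m r : ℕ) (hr : 1 ≤ r) (hrm : r ≤ m) :
    (∃ c : V → Fin m, (∀ u v, G.Adj u v → c u ≠ c v) ∧
        ∀ v, ((G.neighborFinset v).image c).card + 1 ≤ r) ↔
      Nonempty (G →g Ugraph m r) := by
  constructor
  · rintro ⟨c, hproper, hloc⟩
    -- extend neighbor color set to size r-1 avoiding c v
    have hA : ∀ v : V, ∃ A : Finset (Fin m),
        (G.neighborFinset v).image c ⊆ A ∧ A.card = r - 1 ∧ c v ∉ A := by
      intro v
      have hsub : (G.neighborFinset v).image c ⊆ {c v}ᶜ := by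
        intro x hx
        simp only [Finset.mem_image, SimpleGraph.mem_neighborFinset] at hx
        obtain ⟨u, hu, rfl⟩ := hx
        simp [Finset.mem_compl]
        exact fun h => hproper v u hu h.symm
      have hcard : ({c v}ᶜ : Finset (Fin m)).card = m - 1 := by
        rw [Finset.card_compl]; simp
      have h1 : ((G.neighborFinset v).image c).card ≤ r - 1 := by
        have := hloc v; omega
      have h2 : r - 1 ≤ ({c v}ᶜ : Finset (Fin m)).card := by
        rw [hcard]; omega
      obtain ⟨A, hsA, hAc, hAcard⟩ :=
        Finset.exists_subsuperset_card_eq hsub h1 h2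
      exact ⟨A, hsA, hAcard, fun h => by simpa using hAc h⟩
    choose A hAsub hAcard hAnot using hA
    refine ⟨⟨fun v => ⟨(c v, A v), hAcard v, hAnot v⟩, ?_⟩⟩
    intro u v huv
    constructor
    · exact hAsub v (Finset.mem_image_of_mem c ((G.mem_neighborFinset v u).2 huv.symm))
    · exact hAsub u (Finset.mem_image_of_mem c ((G.mem_neighborFinset u v).2 huv))
  · rintro ⟨f⟩
    refine ⟨fun v => (f v).val.1, ?_, ?_⟩
    · intro u v huv heq
      have h := f.map_rel huv
      have : (f u).val.1 ∈ (f v).val.2 := h.1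
      rw [show (f u).val.1 = (f v).val.1 from heq] at this
      exact (f v).property.2 this
    · intro v
      have hsub : (G.neighborFinset v).image (fun u => (f u).val.1) ⊆ (f v).val.2 := by
        intro x hx
        simp only [Finset.mem_image, SimpleGraph.mem_neighborFinset] at hx
        obtain ⟨u, hu, rfl⟩ := hx
        exact (f.map_rel hu.symm).1
      have := Finset.card_le_card hsub
      rw [(f v).property.1] at this
      omega
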